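/- Let V be a normal supervisor on the plant G, let the attack constraint be normal (Σ_{c,A} ⊆ Σ_{o,A}), and let A be a successful attacker. Then every string in L(V_A/G) \ L(V/G) has the form s'σ with s' ∈ L(V/G) and σ ∈ Σ_{c,A} such that (s', σ) is an attack pair. -/
import Mathlib


open scoped Classical

namespace ActuatorAttack

variable {A : Type*}

/-- Natural projection onto a sub-alphabet `S`: erase the letters not in `S`. -/
noncomputable def proj (S : Set A) (l : List A) : List A :=
  l.filter (fun a => decide (a ∈ S))

/-- The least language containing `ε` and closed under appending an event `σ`
allowed by `allow` at `s`, provided the result lies in the plant language `LG`. -/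
inductive Lang (LG : Set (List A)) (allow : List A → Set A) : List A → Prop
  | nil : Lang LG allow []
  | snoc {s : List A} {σ : A} : Lang LG allow s → σ ∈ allow s →
      (s ++ [σ]) ∈ LG → Lang LG allow (s ++ [σ])

/-- The closed-loop language `L(V/G)`. -/
def LVG (LG : Set (List A)) (So : Set A) (V : List A → Set A) :
    Set (List A) :=
  {s | Lang LG (fun t => V (proj So t)) s}

/-- Auxiliary function for the attacker-observation map: `pre` is the prefix
of the supervisor observation sequence already processed. -/
noncomputable def phatAux (V : List A → Set A) (SoA : Set A) :
    List A → List A → List (List A × Set A)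
  | _, [] => []
  | pre, σ :: rest =>
      (proj SoA [σ], V (pre ++ [σ])) :: phatAux V SoA (pre ++ [σ]) rest

/-- The attacker-observation map `P̂`: the i-th letter of `P̂(σ₁⋯σₙ)` is
`(P_{o,A}(σᵢ), V(σ₁⋯σᵢ))`. -/
noncomputable def phat (V : List A → Set A) (SoA : Set A) (w : List A) :
    List (List A × Set A) :=
  phatAux V SoA [] w

/-- The attacked supervisor `V_A`. -/
noncomputable def VA (V : List A → Set A) (ScA SoA : Set A)
    (Att : List (List A × Set A) → Set A) (w : List A) : Set A :=
  (V w \ ScA) ∪ Att (phat V SoA w)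

/-- The attacked closed-loop language `L(V_A/G)`. -/
def LVAG (LG : Set (List A)) (So : Set A) (V : List A → Set A)
    (ScA SoA : Set A) (Att : List (List A × Set A) → Set A) : Set (List A) :=
  {s | Lang LG (fun t =>
      {σ | proj So t ∈ proj So '' LVG LG So V ∧
           σ ∈ VA V ScA SoA Att (proj So t)}) s}

/-- An attacker is enabling if it enables every attackable event enabled by
the supervisor. -/
def Enabling (LG : Set (List A)) (So : Set A) (V : List A → Set A)
    (ScA SoA : Set A) (Att : List (List A × Set A) → Set A) : Prop :=
  ∀ w ∈ proj So '' LVG LG So V, V w ∩ ScA ⊆ Att (phat V SoA w)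

/-- An attacker is successful if the attacked closed-loop language meets the
damage set, and everything outside `P_o⁻¹(P_o(L(V/G)))` lies in `L_dmg·Σ*`. -/
def Successful (LG : Set (List A)) (So : Set A) (V : List A → Set A)
    (ScA SoA : Set A) (Att : List (List A × Set A) → Set A)
    (Ldmg : Set (List A)) : Prop :=
  (LVAG LG So V ScA SoA Att ∩ Ldmg).Nonempty ∧
  LVAG LG So V ScA SoA Att \ (proj So ⁻¹' (proj So '' LVG LG So V)) ⊆
    {t | ∃ d ∈ Ldmg, d <+: t}

/-- `(s, σ)` is an attack pair. -/
def AttackPair (LG : Set (List A)) (So : Set A) (V : List A → Set A)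
    (ScA SoA : Set A) (Ldmg : Set (List A)) (s : List A) (σ : A) : Prop :=
  s ∈ LVG LG So V ∧ σ ∈ ScA ∧ s ++ [σ] ∈ Ldmg ∧
  ∀ s' ∈ LVG LG So V,
    phat V SoA (proj So s) = phat V SoA (proj So s') →
    s' ++ [σ] ∈ LG → s' ++ [σ] ∈ Ldmg

/-- `En(s, σ)`: one-step `σ`-extensions in `L(G)` of strings of `L(V/G)` that
are attacker-observation equivalent to `s`. -/
def En (LG : Set (List A)) (So : Set A) (V : List A → Set A)
    (SoA : Set A) (s : List A) (σ : A) : Set (List A) :=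
  {t | ∃ s' ∈ LVG LG So V, t = s' ++ [σ] ∧ t ∈ LG ∧
       phat V SoA (proj So s) = phat V SoA (proj So s')}

/-- `I(ŵ)`: attackable events `σ` such that some string `s'` of `L(V/G)` with
attacker observation `ŵ` forms an attack pair `(s', σ)`. -/
def ISet (LG : Set (List A)) (So : Set A) (V : List A → Set A)
    (ScA SoA : Set A) (Ldmg : Set (List A))
    (w : List (List A × Set A)) : Set A :=
  {σ | σ ∈ ScA ∧ ∃ s' ∈ LVG LG So V,
        phat V SoA (proj So s') = w ∧ AttackPair LG So V ScA SoA Ldmg s' σ}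

/-- The supremal attacker `A^sup`. -/
def Asup (LG : Set (List A)) (So : Set A) (V : List A → Set A)
    (ScA SoA : Set A) (Ldmg : Set (List A))
    (w : List (List A × Set A)) : Set A :=
  {σ | ∃ s ∈ LVG LG So V, phat V SoA (proj So s) = w ∧
        σ ∈ V (proj So s) ∩ ScA} ∪
  ISet LG So V ScA SoA Ldmg w

-- proj lemmas
lemma proj_append (S : Set A) (l m : List A) :
    proj S (l ++ m) = proj S l ++ proj S m := by simp [proj]

@[simp] lemma proj_nil (S : Set A) : proj S ([] : List A) = [] := rfl

lemma proj_single_mem {S : Set A} {a : A} (h : a ∈ S) : proj S [a] = [a] := by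
  simp [proj, h]

lemma proj_single_not_mem {S : Set A} {a : A} (h : a ∉ S) : proj S [a] = [] := by
  simp [proj, h]

lemma proj_single_eq {S : Set A} {a b : A} (h : proj S [a] = [b]) : a = b := by
  by_cases ha : a ∈ S
  · rw [proj_single_mem ha] at h; exact (List.cons.injEq _ _ _ _ ▸ h).1
  · rw [proj_single_not_mem ha] at h; exact absurd h (by simp)

-- phat lemmas
@[simp] lemma phatAux_nil (V : List A → Set A) (SoA : Set A) (pre : List A) :
    phatAux V SoA pre [] = [] := rfl

@[simp] lemma phatAux_cons (V : List A → Set A) (SoA : Set A) (pre : List A)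
    (σ : A) (rest : List A) :
    phatAux V SoA pre (σ :: rest) =
      (proj SoA [σ], V (pre ++ [σ])) :: phatAux V SoA (pre ++ [σ]) rest := rfl

@[simp] lemma phat_nil (V : List A → Set A) (SoA : Set A) :
    phat V SoA [] = [] := rfl

lemma phatAux_append (V : List A → Set A) (SoA : Set A)
    (pre w1 w2 : List A) :
    phatAux V SoA pre (w1 ++ w2) =
      phatAux V SoA pre w1 ++ phatAux V SoA (pre ++ w1) w2 := by
  induction w1 generalizing pre with
  | nil => simp
  | cons a w1 ih => simp [ih, List.append_assoc]

lemma phat_snoc (V : List A → Set A) (SoA : Set A) (w : List A) (σ : A) :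
    phat V SoA (w ++ [σ]) = phat V SoA w ++ [(proj SoA [σ], V (w ++ [σ]))] := by
  simp [phat, phatAux_append]

lemma phatAux_length (V : List A → Set A) (SoA : Set A) (pre w : List A) :
    (phatAux V SoA pre w).length = w.length := by
  induction w generalizing pre with
  | nil => rfl
  | cons a w ih => simp [ih]

lemma phat_eq_nil {V : List A → Set A} {SoA : Set A} {w : List A}
    (h : phat V SoA w = []) : w = [] := by
  have := phatAux_length V SoA [] w
  rw [phat] at h; rw [h] at this
  exact List.eq_nil_of_length_eq_zero this.symm

lemma snoc_inj {x y : List A} {a b : A} (h : x ++ [a] = y ++ [b]) :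
    x = y ∧ a = b := by
  obtain ⟨h1, h2⟩ := List.append_inj' h rfl
  exact ⟨h1, by injection h2⟩

lemma phat_V_eq {V : List A → Set A} {SoA : Set A} {w w' : List A}
    (h : phat V SoA w = phat V SoA w') : V w = V w' := by
  rcases List.eq_nil_or_concat w with rfl | ⟨u, a, rfl⟩
  · rw [phat_nil] at h
    rw [phat_eq_nil h.symm]
  · rcases List.eq_nil_or_concat w' with rfl | ⟨u', a', rfl⟩
    · rw [phat_nil] at h
      exact absurd (phat_eq_nil h) (by simp)
    · simp only [List.concat_eq_append] at h ⊢
      rw [phat_snoc, phat_snoc] at h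
      have := (snoc_inj h).2
      exact congrArg Prod.snd this

-- Lang lemmas
lemma lang_snoc_inv {LG : Set (List A)} {allow : List A → Set A} {t : List A}
    (h : Lang LG allow t) :
    ∀ s σ, t = s ++ [σ] → Lang LG allow s ∧ σ ∈ allow s ∧ t ∈ LG := by
  cases h with
  | nil => intro s σ he; exact absurd he (by simp)
  | snoc h1 h2 h3 =>
      intro s σ he
      obtain ⟨rfl, rfl⟩ := snoc_inj he.symm
      exact ⟨h1, h2, h3⟩

lemma lang_prefix {LG : Set (List A)} {allow : List A → Set A} {t : List A}
    (h : Lang LG allow t) : ∀ u, u <+: t → Lang LG allow u := by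
  induction h with
  | nil => intro u hu; rw [List.prefix_nil.mp hu]; exact Lang.nil
  | @snoc s σ h1 h2 h3 ih =>
      intro u hu
      by_cases hl : u.length ≤ s.length
      · exact ih u (List.prefix_of_prefix_length_le hu ⟨[σ], rfl⟩ hl)
      · have hlen : u.length = (s ++ [σ]).length := by
          have := hu.length_le
          simp only [List.length_append, List.length_singleton] at this ⊢
          omega
        rw [hu.eq_of_length hlen]
        exact Lang.snoc h1 h2 h3

lemma filter_snoc_decomp {p : A → Bool} {l w : List A} {σ : A}
    (h : l.filter p = w ++ [σ]) :
    ∃ u v, l = u ++ σ :: v ∧ u.filter p = w ∧ v.filter p = [] := by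
  induction l using List.reverseRecOn generalizing w with
  | nil => exact absurd h (by simp)
  | append_singleton l' a ih =>
      rw [List.filter_append] at h
      by_cases hp : p a = true
      · simp only [List.filter_singleton, hp, if_pos, cond_true] at h
        obtain ⟨rfl, rfl⟩ := snoc_inj h
        exact ⟨l', [], by simp, rfl, rfl⟩
      · simp only [List.filter_singleton, hp, cond_false, List.append_nil] at h
        obtain ⟨u, v, rfl, h1, h2⟩ := ih h
        exact ⟨u, v ++ [a], by simp, h1,
          by simp [List.filter_append, h2, List.filter_singleton, hp]⟩

lemma proj_snoc_decomp {S : Set A} {l w : List A} {σ : A}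
    (h : proj S l = w ++ [σ]) :
    ∃ u v, l = u ++ σ :: v ∧ proj S u = w ∧ proj S v = [] :=
  filter_snoc_decomp h



section Main

variable {LG : Set (List A)} {So Sc : Set A} {V : List A → Set A}
  {ScA SoA : Set A} {Att : List (List A × Set A) → Set A}

/-- Lemma E: walk back one observable step in `L(V_A/G)`. -/
lemma lvag_phat_pred (hoA : SoA ⊆ So) {s : List A}
    (hs : s ∈ LVAG LG So V ScA SoA Att) :
    ∀ X y, phat V SoA (proj So s) = X ++ [y] →
    ∃ p, p ∈ LVAG LG So V ScA SoA Att ∧ phat V SoA (proj So p) = X ∧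
      ∀ σ ∈ SoA, y.1 = [σ] → σ ∈ VA V ScA SoA Att (proj So p) := by
  induction hs with
  | nil =>
      intro X y h
      simp only [proj_nil, phat_nil] at h
      exact absurd h (by simp)
  | @snoc u τ h1 h2 h3 ih =>
      intro X y h
      by_cases hτ : τ ∈ So
      · rw [proj_append, proj_single_mem hτ, phat_snoc] at h
        obtain ⟨hX, hy⟩ := snoc_inj h
        refine ⟨u, h1, hX, ?_⟩
        intro σ hσA hy1
        have hτσ : τ = σ := proj_single_eq (by rw [← hy] at hy1; exact hy1)
        exact hτσ ▸ h2.2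
      · rw [proj_append, proj_single_not_mem hτ, List.append_nil] at h
        exact ih X y h

/-- Lemma D: transfer of `L(V_A/G)`-membership along attacker-observation
equivalence. -/
lemma lvg_mem_lvag (hnormV : Sc ⊆ So) (hcA : ScA ⊆ Sc) (hnormA : ScA ⊆ SoA)
    (hoA : SoA ⊆ So) (hV : ∀ w, Scᶜ ⊆ V w) {s'' : List A}
    (hs'' : s'' ∈ LVG LG So V) :
    ∀ s ∈ LVAG LG So V ScA SoA Att,
      phat V SoA (proj So s) = phat V SoA (proj So s'') →
      s'' ∈ LVAG LG So V ScA SoA Att := by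
  induction hs'' with
  | nil => intro s _ _; exact Lang.nil
  | @snoc u σ' h1 h2 h3 ih =>
      intro s hs hps
      by_cases hσ : σ' ∈ So
      · rw [proj_append, proj_single_mem hσ, phat_snoc] at hps
        obtain ⟨p, hp, hpe, hpVA⟩ := lvag_phat_pred hoA hs _ _ hps
        have hu : u ∈ LVAG LG So V ScA SoA Att := ih p hp hpe
        have himg : proj So u ∈ proj So '' LVG LG So V := ⟨u, h1, rfl⟩
        by_cases hA : σ' ∈ ScA
        · have hVAp : σ' ∈ VA V ScA SoA Att (proj So p) :=
            hpVA σ' (hnormA hA) (by rw [proj_single_mem (hnormA hA)])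
          have hAtt : σ' ∈ Att (phat V SoA (proj So p)) := by
            rcases hVAp with h | h
            · exact absurd hA h.2
            · exact h
          rw [hpe] at hAtt
          exact Lang.snoc hu ⟨himg, Or.inr hAtt⟩ h3
        · exact Lang.snoc hu ⟨himg, Or.inl ⟨h2, hA⟩⟩ h3
      · rw [proj_append, proj_single_not_mem hσ, List.append_nil] at hps
        have hu : u ∈ LVAG LG So V ScA SoA Att := ih s hs hps
        have himg : proj So u ∈ proj So '' LVG LG So V := ⟨u, h1, rfl⟩
        have hA : σ' ∉ ScA := fun h => hσ (hnormV (hcA h))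
        exact Lang.snoc hu ⟨himg, Or.inl ⟨h2, hA⟩⟩ h3

/-- Lemma A: normality transfer into `L(V/G)`. -/
lemma normal_lvg (hnormV : Sc ⊆ So) (hV : ∀ w, Scᶜ ⊆ V w)
    (hpref : ∀ s t : List A, s <+: t → t ∈ LG → s ∈ LG) :
    ∀ s : List A, s ∈ LG → ∀ s'' ∈ LVG LG So V,
      proj So s = proj So s'' → s ∈ LVG LG So V := by
  intro s
  induction s using List.reverseRecOn with
  | nil => intro _ _ _ _; exact Lang.nil
  | append_singleton u σ ih =>
      intro hsg s'' hs'' hpe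
      have hu : u ∈ LG := hpref u (u ++ [σ]) ⟨[σ], rfl⟩ hsg
      by_cases hσ : σ ∈ So
      · rw [proj_append, proj_single_mem hσ] at hpe
        obtain ⟨u'', v, rfl, hpu, hpv⟩ := proj_snoc_decomp hpe.symm
        have hpre : u'' ++ [σ] <+: u'' ++ σ :: v := ⟨v, by simp⟩
        have hl : u'' ++ [σ] ∈ LVG LG So V := lang_prefix hs'' _ hpre
        obtain ⟨hu'', hσV, _⟩ := lang_snoc_inv hl _ _ rfl
        have huV : u ∈ LVG LG So V := ih hu u'' hu'' hpu.symm
        have : σ ∈ V (proj So u) := by rw [hpu] at hσV; exact hσV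
        exact Lang.snoc huV this hsg
      · rw [proj_append, proj_single_not_mem hσ, List.append_nil] at hpe
        have huV : u ∈ LVG LG So V := ih hu s'' hs'' hpe
        have hσV : σ ∈ V (proj So u) := hV _ (fun h => hσ (hnormV h))
        exact Lang.snoc huV hσV hsg

/-- Lemma G: one-step extensions disabled by the supervisor land in the
damage set. -/
lemma damage_of_disabled {Ldmg : Set (List A)}
    (hpref : ∀ s t : List A, s <+: t → t ∈ LG → s ∈ LG)
    (hLdV : Ldmg ∩ LVG LG So V = ∅)
    (hsucc2 : (LVAG LG So V ScA SoA Att) \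
        (proj So ⁻¹' (proj So '' LVG LG So V)) ⊆ {t | ∃ d ∈ Ldmg, d <+: t})
    {s' : List A} {σ : A} (hs' : s' ∈ LVG LG So V) (hσSo : σ ∈ So)
    (hσV : σ ∉ V (proj So s'))
    (ht : s' ++ [σ] ∈ LVAG LG So V ScA SoA Att) :
    s' ++ [σ] ∈ Ldmg := by
  have hnotimg : proj So (s' ++ [σ]) ∉ proj So '' LVG LG So V := by
    rintro ⟨s₁, hs₁, he⟩
    rw [proj_append, proj_single_mem hσSo] at he
    obtain ⟨u₁, v₁, rfl, hpu, _⟩ := proj_snoc_decomp he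
    have hl : u₁ ++ [σ] ∈ LVG LG So V :=
      lang_prefix hs₁ _ ⟨v₁, by simp⟩
    obtain ⟨_, hσV', _⟩ := lang_snoc_inv hl _ _ rfl
    rw [hpu] at hσV'
    exact hσV hσV'
  obtain ⟨d, hd, hdp⟩ := hsucc2 ⟨ht, hnotimg⟩
  by_cases hde : d = s' ++ [σ]
  · exact hde ▸ hd
  · exfalso
    have hle : d.length ≤ s'.length := by
      have h1 := hdp.length_le
      simp only [List.length_append, List.length_singleton] at h1
      rcases Nat.lt_or_ge d.length (s'.length + 1) with h | h
      · omega
      · exact absurd (hdp.eq_of_length (by simp; omega)) hde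
    have hds : d <+: s' := List.prefix_of_prefix_length_le hdp ⟨[σ], rfl⟩ hle
    have : d ∈ Ldmg ∩ LVG LG So V := ⟨hd, lang_prefix hs' _ hds⟩
    rw [hLdV] at this
    exact this

end Main

/-- For a successful attacker `A`, every string of
`L(V_A/G) \ L(V/G)` has the form `s'σ` with `(s', σ)` an attack pair. -/
theorem stmt_17 {A : Type*} [Fintype A] (So Sc : Set A) (LG : Set (List A))
    (hnil : [] ∈ LG) (hpref : ∀ s t : List A, s <+: t → t ∈ LG → s ∈ LG)
    (V : List A → Set A) (hV : ∀ w, Scᶜ ⊆ V w)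
    (hnormV : Sc ⊆ So)
    (ScA SoA : Set A) (hcA : ScA ⊆ Sc) (hoA : SoA ⊆ So)
    (hnormA : ScA ⊆ SoA)
    (Ldmg : Set (List A)) (hLd : Ldmg ⊆ LG)
    (hLdV : Ldmg ∩ LVG LG So V = ∅)
    (Att : List (List A × Set A) → Set A) (hAtt : ∀ x, Att x ⊆ ScA)
    (hsucc : Successful LG So V ScA SoA Att Ldmg) :
    ∀ t ∈ LVAG LG So V ScA SoA Att \ LVG LG So V,
      ∃ s' σ, t = s' ++ [σ] ∧ s' ∈ LVG LG So V ∧ σ ∈ ScA ∧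
        AttackPair LG So V ScA SoA Ldmg s' σ := by
  obtain ⟨_, hsucc2⟩ := hsucc
  rintro t ⟨htA, htV⟩
  rcases List.eq_nil_or_concat t with rfl | ⟨s, σ, rfl⟩
  · exact absurd Lang.nil htV
  · rw [List.concat_eq_append] at htA htV ⊢
    obtain ⟨hsA, hallow, htG⟩ := lang_snoc_inv htA _ _ rfl
    obtain ⟨himg, hVA⟩ := hallow
    obtain ⟨s₀, hs₀, hps₀⟩ := himg
    have hsG : s ∈ LG := hpref s (s ++ [σ]) ⟨[σ], rfl⟩ htG
    have hsV : s ∈ LVG LG So V :=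
      normal_lvg hnormV hV hpref s hsG s₀ hs₀ hps₀.symm
    have hσV : σ ∉ V (proj So s) := fun h => htV (Lang.snoc hsV h htG)
    have hσAtt : σ ∈ Att (phat V SoA (proj So s)) := by
      rcases hVA with h | h
      · exact absurd h.1 hσV
      · exact h
    have hσA : σ ∈ ScA := hAtt _ hσAtt
    have hσSo : σ ∈ So := hnormV (hcA hσA)
    have hdmg : s ++ [σ] ∈ Ldmg :=
      damage_of_disabled hpref hLdV hsucc2 hsV hσSo hσV htA
    refine ⟨s, σ, rfl, hsV, hσA, hsV, hσA, hdmg, ?_⟩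
    intro s'' hs'' hpe hsg''
    have hs''A : s'' ∈ LVAG LG So V ScA SoA Att :=
      lvg_mem_lvag hnormV hcA hnormA hoA hV hs'' s hsA hpe
    have ht'' : s'' ++ [σ] ∈ LVAG LG So V ScA SoA Att :=
      Lang.snoc hs''A ⟨⟨s'', hs'', rfl⟩,
        Or.inr (by rw [← hpe]; exact hσAtt)⟩ hsg''
    have hσV'' : σ ∉ V (proj So s'') := by
      rw [← phat_V_eq hpe]; exact hσV
    exact damage_of_disabled hpref hLdV hsucc2 hs'' hσSo hσV'' ht''


end ActuatorAttack
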